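/- Let G be a connected graph and let G̃ = (Ṽ, Ẽ) be a connected subgraph of G. Let S be a collection of cycle edges of G that are not contained in Ẽ but are incident to Ṽ. Then there exists a subset S' ⊆ S of cardinality at least |S|/2 such that the graph obtained from G by removing all edges in S' is still connected. -/

import Mathlib

/-- An edge `e` of a graph `G` is a *cycle edge* if it belongs to some cycle of `G`. -/
def SimpleGraph.IsCycleEdge {V : Type*} (G : SimpleGraph V) (e : Sym2 V) : Prop :=
  ∃ (v : V) (c : G.Walk v v), c.IsCycle ∧ e ∈ c.edges

namespace StmtOneAux

open SimpleGraph

variable {V : Type*}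

/-- The graph of edges of `G` avoiding the vertex set `W`. -/
def Gout (G : SimpleGraph V) (W : Set V) : SimpleGraph V where
  Adj a b := G.Adj a b ∧ a ∉ W ∧ b ∉ W
  symm := ⟨fun a b ⟨h, ha, hb⟩ => ⟨h.symm, hb, ha⟩⟩
  loopless := ⟨fun a ⟨h, _, _⟩ => G.loopless.irrefl a h⟩

/-- `f` is an edge of `G` from the outside-component `c` into `W`. -/
def CrossC (G : SimpleGraph V) (W : Set V) (c : (Gout G W).ConnectedComponent)
    (f : Sym2 V) : Prop :=
  ∃ a b, f = s(a, b) ∧ G.Adj a b ∧ a ∉ W ∧ b ∈ W ∧ (Gout G W).connectedComponentMk a = c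

lemma crossC_unique {G : SimpleGraph V} {W : Set V} {c c' : (Gout G W).ConnectedComponent}
    {f : Sym2 V} (h : CrossC G W c f) (h' : CrossC G W c' f) : c = c' := by
  obtain ⟨a, b, rfl, _, haW, hbW, hc⟩ := h
  obtain ⟨a', b', heq, _, haW', hbW', hc'⟩ := h'
  rw [Sym2.eq_iff] at heq
  rcases heq with ⟨rfl, rfl⟩ | ⟨rfl, rfl⟩
  · rw [← hc, ← hc']
  · exact absurd hbW haW'

/-- Any walk from outside `W` into `W` contains a crossing edge for the
component of its start. -/
lemma crossing {G : SimpleGraph V} {W : Set V} :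
    ∀ {u v : V} (p : G.Walk u v), u ∉ W → v ∈ W →
      ∃ f ∈ p.edges, CrossC G W ((Gout G W).connectedComponentMk u) f := by
  intro u v p
  induction p with
  | nil => intro hu hv; exact absurd hv hu
  | @cons u x v h q ih =>
    intro hu hv
    by_cases hx : x ∈ W
    · exact ⟨s(u, x), by simp, u, x, rfl, h, hu, hx, rfl⟩
    · obtain ⟨f, hf, hc⟩ := ih hx hv
      refine ⟨f, by simp [hf], ?_⟩
      have hcc : (Gout G W).connectedComponentMk x = (Gout G W).connectedComponentMk u :=
        ConnectedComponent.sound (Adj.reachable (G := Gout G W) ⟨h, hu, hx⟩).symm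
      rwa [hcc] at hc

end StmtOneAux

open StmtOneAux SimpleGraph

/-- Let `G` be a connected graph, `G'` a connected subgraph, and `S` a
collection of cycle edges of `G` not contained in `G'` but incident to the vertex set of `G'`.
Then there is `S' ⊆ S` with `|S'| ≥ |S|/2` such that removing the edges of `S'` from `G`
keeps it connected. -/
theorem stmt_1 {V : Type*} [Fintype V] [DecidableEq V] (G : SimpleGraph V)
    (hG : G.Connected) (G' : G.Subgraph) (hG' : G'.Connected)
    (S : Finset (Sym2 V))
    (hS : ∀ e ∈ S, G.IsCycleEdge e ∧ e ∉ G'.edgeSet ∧ ∃ v ∈ G'.verts, v ∈ e) :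
    ∃ S' ⊆ S, S.card ≤ 2 * S'.card ∧ (G.deleteEdges (S' : Set (Sym2 V))).Connected := by
  classical
  set W : Set V := G'.verts with hWdef
  obtain ⟨w0, hw0⟩ := hG'.nonempty
  -- `BadC c` : the component `c` has a crossing edge, and all its crossing edges are in `S`.
  set BadC : (Gout G W).ConnectedComponent → Prop :=
    fun c => (∃ e, CrossC G W c e) ∧ ∀ f, CrossC G W c f → f ∈ S with hBadC
  -- a chosen crossing edge for each component that has one
  set rep : (Gout G W).ConnectedComponent → Sym2 V :=
    fun c => if h : ∃ e, CrossC G W c e then h.choose else s(w0, w0) with hrep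
  have rep_spec : ∀ c, (∃ e, CrossC G W c e) → CrossC G W c (rep c) := by
    intro c h
    simp only [hrep, dif_pos h]
    exact h.choose_spec
  -- the kept edges
  set K : Finset (Sym2 V) := S.filter (fun e => ∃ c, BadC c ∧ rep c = e) with hK
  have hKS : K ⊆ S := Finset.filter_subset _ _
  refine ⟨S \ K, Finset.sdiff_subset, ?_, ?_⟩
  · -- cardinality
    -- partner map
    set pr : Sym2 V → Sym2 V := fun e =>
      if h : ∃ f, f ∈ S ∧ f ≠ e ∧ ∃ c, CrossC G W c e ∧ CrossC G W c f then h.choose else e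
      with hpr
    have pr_spec : ∀ e ∈ K, pr e ∈ S ∧ pr e ≠ e ∧
        ∃ c, CrossC G W c e ∧ CrossC G W c (pr e) := by
      intro e heK
      rw [hK, Finset.mem_filter] at heK
      obtain ⟨heS, c, hbad, hrepc⟩ := heK
      have hce : CrossC G W c e := hrepc ▸ rep_spec c hbad.1
      obtain ⟨a, b, rfl, hab, haW, hbW, hcomp⟩ := hce
      -- the edge is a cycle edge, so it is not a bridge
      obtain ⟨hcyc, -, -⟩ := hS _ heS
      obtain ⟨u, cyc, hcyc', hmem⟩ := hcyc
      have hreach : (G \ SimpleGraph.fromEdgeSet {s(a, b)}).Reachable a b :=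
        (SimpleGraph.adj_and_reachable_delete_edges_iff_exists_cycle.mpr
          ⟨u, cyc, hcyc', hmem⟩).2
      obtain ⟨p, hp⟩ := SimpleGraph.reachable_delete_edges_iff_exists_walk.mp hreach
      obtain ⟨f, hfp, hfc⟩ := crossing p haW hbW
      have hfS : f ∈ S := hbad.2 f (hcomp ▸ hfc)
      have hfne : f ≠ s(a, b) := fun h => hp (h ▸ hfp)
      have hex : ∃ f, f ∈ S ∧ f ≠ s(a, b) ∧
          ∃ c', CrossC G W c' s(a, b) ∧ CrossC G W c' f := by
        exact ⟨f, hfS, hfne, c, ⟨a, b, rfl, hab, haW, hbW, hcomp⟩, hcomp ▸ hfc⟩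
      simp only [hpr, dif_pos hex]
      obtain ⟨h1, h2, h3⟩ := hex.choose_spec
      exact ⟨h1, h2, h3⟩
    -- injective on K
    have pr_inj : Set.InjOn pr K := by
      intro e1 h1 e2 h2 heq
      rw [Finset.mem_coe] at h1 h2
      have s1 := pr_spec e1 h1
      have s2 := pr_spec e2 h2
      obtain ⟨-, -, c1, hc1e, hc1p⟩ := s1
      obtain ⟨-, -, c2, hc2e, hc2p⟩ := s2
      have : c1 = c2 := crossC_unique hc1p (heq ▸ hc2p)
      subst this
      rw [hK, Finset.mem_filter] at h1 h2
      obtain ⟨-, d1, hb1, hr1⟩ := h1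
      obtain ⟨-, d2, hb2, hr2⟩ := h2
      have hd1 : d1 = c1 := crossC_unique (hr1 ▸ rep_spec d1 hb1.1) hc1e
      have hd2 : d2 = c1 := crossC_unique (hr2 ▸ rep_spec d2 hb2.1) hc2e
      rw [← hr1, ← hr2, hd1, hd2]
    -- image disjoint from K
    have pr_not_mem : ∀ e ∈ K, pr e ∉ K := by
      intro e heK hprK
      obtain ⟨-, hne, c, hce, hcp⟩ := pr_spec e heK
      rw [hK, Finset.mem_filter] at hprK heK
      obtain ⟨-, d, hbd, hrd⟩ := hprK
      have hdc : d = c := crossC_unique (hrd ▸ rep_spec d hbd.1) hcp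
      obtain ⟨-, d', hbd', hrd'⟩ := heK
      have hd'c : d' = c := crossC_unique (hrd' ▸ rep_spec d' hbd'.1) hce
      exact hne (by rw [← hrd, ← hrd', hdc, hd'c])
    have hPsub : K.image pr ⊆ S := by
      intro f hf
      obtain ⟨e, he, rfl⟩ := Finset.mem_image.mp hf
      exact (pr_spec e he).1
    have hdisj : Disjoint K (K.image pr) := by
      rw [Finset.disjoint_right]
      intro f hf
      obtain ⟨e, he, rfl⟩ := Finset.mem_image.mp hf
      exact pr_not_mem e he
    have hcard : K.card + K.card ≤ S.card := by
      have h1 : (K ∪ K.image pr).card ≤ S.card :=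
        Finset.card_le_card (Finset.union_subset hKS hPsub)
      rw [Finset.card_union_of_disjoint hdisj, Finset.card_image_of_injOn pr_inj] at h1
      exact h1
    have := Finset.card_sdiff_of_subset hKS
    have := Finset.card_le_card hKS
    omega
  · -- connectivity
    set H : SimpleGraph V := G.deleteEdges ((S \ K : Finset (Sym2 V)) : Set (Sym2 V)) with hH
    have hdelmem : ∀ {x y : V}, G.Adj x y → s(x, y) ∉ (S \ K : Finset (Sym2 V)) → H.Adj x y := by
      intro x y hxy hmem
      rw [hH, SimpleGraph.deleteEdges_adj]
      exact ⟨hxy, by simpa using hmem⟩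
    -- vertices of W are mutually reachable in H
    have hWreach' : ∀ x y : G'.verts, H.Reachable ↑x ↑y := by
      intro x y
      obtain ⟨p⟩ := hG' x y
      induction p with
      | nil => rfl
      | @cons a z c h q ih =>
        have hadj : G'.Adj ↑a ↑z := h
        have hG'edge : s(↑a, ↑z) ∈ G'.edgeSet := hadj
        have hnS : s((a : V), (z : V)) ∉ S := fun hmem => (hS _ hmem).2.1 hG'edge
        have hadjH : H.Adj ↑a ↑z :=
          hdelmem hadj.adj_sub (fun hmem => hnS (Finset.mem_sdiff.mp hmem).1)
        exact hadjH.reachable.trans ih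
    have hWreach : ∀ x y : V, x ∈ W → y ∈ W → H.Reachable x y :=
      fun x y hx hy => hWreach' ⟨x, hx⟩ ⟨y, hy⟩
    -- Gout edges survive in H
    have hGoutLe : ∀ {x y : V}, (Gout G W).Adj x y → H.Adj x y := by
      rintro x y ⟨hxy, hxW, hyW⟩
      refine hdelmem hxy (fun hmem => ?_)
      obtain ⟨v, hvW, hve⟩ := (hS _ (Finset.mem_sdiff.mp hmem).1).2.2
      rw [Sym2.mem_iff] at hve
      rcases hve with rfl | rfl
      · exact hxW hvW
      · exact hyW hvW
    have hGoutReach : ∀ {x y : V}, (Gout G W).Reachable x y → H.Reachable x y := by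
      intro x y h
      obtain ⟨p⟩ := h
      induction p with
      | nil => rfl
      | cons h q ih => exact (hGoutLe h).reachable.trans ih
    -- every vertex reaches w0 in H
    have hmain : ∀ v : V, H.Reachable v w0 := by
      intro v
      by_cases hv : v ∈ W
      · exact hWreach v w0 hv hw0
      · -- v is outside W; its component has a crossing edge
        set c := (Gout G W).connectedComponentMk v with hc
        obtain ⟨p⟩ := hG.preconnected v w0
        obtain ⟨f0, -, hf0⟩ := crossing p hv hw0
        -- find a crossing edge of c which is not deleted
        have hfind : ∃ f, CrossC G W c f ∧ f ∉ (S \ K : Finset (Sym2 V)) := by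
          by_cases hbad : BadC c
          · have hcc : ∃ e, CrossC G W c e := Exists.intro f0 hf0
            refine ⟨rep c, rep_spec c hcc, ?_⟩
            have : rep c ∈ K := by
              rw [hK, Finset.mem_filter]
              exact ⟨hbad.2 _ (rep_spec c hcc), ⟨c, hbad, rfl⟩⟩
            simp [Finset.mem_sdiff, this]
          · simp only [hBadC] at hbad
            push_neg at hbad
            obtain ⟨f, hfc, hfS⟩ := hbad (Exists.intro f0 hf0)
            exact ⟨f, hfc, fun hmem => hfS (Finset.mem_sdiff.mp hmem).1⟩
        obtain ⟨f, ⟨a, b, rfl, hab, haW, hbW, hcomp⟩, hfdel⟩ := hfind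
        have hva : (Gout G W).Reachable v a :=
          (ConnectedComponent.eq.mp (hcomp.trans hc.symm)).symm
        have hH1 : H.Reachable v a := hGoutReach hva
        have hH2 : H.Adj a b := hdelmem hab hfdel
        exact (hH1.trans hH2.reachable).trans (hWreach b w0 hbW hw0)
    haveI : Nonempty V := hG.nonempty
    exact ⟨fun u v => (hmain u).trans (hmain v).symm⟩
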